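/- arXiv:1112.1467 — 7 statements merged into one kernel-verified Lean document; each statement's English description precedes it below -/
import Mathlib

section
/- Let V be a finite elementary abelian p-group, G a finite p-group acting faithfully on V, and S = V ⋊ G. Let A and M be subgroups of S and suppose M ≤ V or V ≤ M (V viewed as a subgroup of S). Then (A ∩ M)_× = A_× ∩ M. -/
/-!
STATEMENT 3 (Lemma 3.3): Let V be a finite elementary abelian p-group, G a finite
p-group acting faithfully on V, and S = V ⋊ G.  Let A and M be subgroups of S with
M ≤ V or V ≤ M.  Then (A ∩ M)_× = A_× ∩ M.
-/

section SDPSetup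

variable {p : ℕ} [Fact p.Prime]
variable {V : Type} [AddCommGroup V] [Module (ZMod p) V] [Finite V]
variable {G : Type} [Group G] [Finite G]

/-- The homomorphism `G →* MulAut (Multiplicative V)` induced by a linear action
`ρ : G →* GL(V)`, used to form the semidirect product `S = V ⋊ G`. -/
def phiOf (ρ : G →* (V ≃ₗ[ZMod p] V)) : G →* MulAut (Multiplicative V) where
  toFun g := AddEquiv.toMultiplicative (ρ g).toAddEquiv
  map_one' := by
    ext x; show Multiplicative.ofAdd ((ρ 1) x.toAdd) = x; rw [map_one]; rfl
  map_mul' g h := by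
    ext x; show Multiplicative.ofAdd ((ρ (g * h)) x.toAdd) = _; rw [map_mul]; rfl

variable (ρ : G →* (V ≃ₗ[ZMod p] V))

/-- The semidirect product `S = V ⋊ G`. -/
abbrev SDP := SemidirectProduct (Multiplicative V) G (phiOf ρ)

/-- `V`, viewed as a subgroup of `S = V ⋊ G`. -/
def Vsub : Subgroup (SDP ρ) := SemidirectProduct.inl.range

/-- `B_× = (B ∩ V)·π(B)`, where `π : S → G` is the canonical projection and `π(B)`
is viewed as a subgroup of `S` via the canonical inclusion `G → S`. -/
def Btimes (B : Subgroup (SDP ρ)) : Subgroup (SDP ρ) :=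
  (B ⊓ Vsub ρ) ⊔ (B.map SemidirectProduct.rightHom).map SemidirectProduct.inr

end SDPSetup

section AuxProofs

open SemidirectProduct

variable {p : ℕ} [Fact p.Prime]
variable {V : Type} [AddCommGroup V] [Module (ZMod p) V] [Finite V]
variable {G : Type} [Group G] [Finite G]
variable (ρ : G →* (V ≃ₗ[ZMod p] V))

lemma conj_inl_mem (A : Subgroup (SDP ρ)) {a : SDP ρ} (ha : a ∈ A)
    {w : Multiplicative V} (hw : (inl w : SDP ρ) ∈ A) :
    (inl (phiOf ρ a.right w) : SDP ρ) ∈ A := by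
  have h : (inl (phiOf ρ a.right w) : SDP ρ) = a * inl w * a⁻¹ := by
    ext
    · simp [mul_comm, mul_assoc, mul_left_comm]
    · simp
  rw [h]
  exact A.mul_mem (A.mul_mem ha hw) (A.inv_mem ha)

lemma mem_Btimes (A : Subgroup (SDP ρ)) (x : SDP ρ) :
    x ∈ Btimes ρ A ↔ (inl x.left : SDP ρ) ∈ A ∧ x.right ∈ A.map rightHom := by
  constructor
  · intro hx
    let K : Subgroup (SDP ρ) :=
      { carrier := {y : SDP ρ | (inl y.left : SDP ρ) ∈ A ∧ y.right ∈ A.map rightHom}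
        one_mem' := by
          constructor
          · simpa using A.one_mem
          · simpa using Subgroup.one_mem (A.map rightHom)
        mul_mem' := by
          rintro y z ⟨hy1, hy2⟩ ⟨hz1, hz2⟩
          obtain ⟨a, haA, hr⟩ := hy2
          constructor
          · have hconj := conj_inl_mem ρ A haA hz1
            have hra : a.right = y.right := hr
            have heq : (inl ((y * z).left) : SDP ρ)
                = inl y.left * inl ((phiOf ρ) y.right z.left) := by
              rw [mul_left]; exact MonoidHom.map_mul inl _ _
            rw [heq]
            exact A.mul_mem hy1 (by rw [← hra]; exact hconj)
          · rw [mul_right]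
            exact Subgroup.mul_mem _ ⟨a, haA, hr⟩ hz2
        inv_mem' := by
          rintro y ⟨hy1, hy2⟩
          obtain ⟨a, haA, hr⟩ := hy2
          constructor
          · have h1 : (inl y.left⁻¹ : SDP ρ) ∈ A := by
              rw [map_inv]; exact A.inv_mem hy1
            have hconj := conj_inl_mem ρ A (A.inv_mem haA) h1
            have hra : a⁻¹.right = y⁻¹.right := by
              simp only [inv_right]
              rw [show a.right = y.right from hr]
            rw [inv_left]
            rw [← show a.right = y.right from hr]
            simpa using hconj
          · rw [inv_right]
            exact Subgroup.inv_mem _ ⟨a, haA, hr⟩ }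
    have hle : Btimes ρ A ≤ K := by
      apply sup_le
      · rintro y ⟨hyA, v, hv⟩
        constructor
        · have : y.left = v := by rw [← hv]; rfl
          rw [this, hv]; exact hyA
        · have : y.right = 1 := by rw [← hv]; rfl
          rw [this]; exact Subgroup.one_mem _
      · rintro y ⟨g, hg, rfl⟩
        constructor
        · simpa using A.one_mem
        · simpa using hg
    exact hle hx
  · rintro ⟨h1, h2⟩
    rw [← inl_left_mul_inr_right x]
    apply Subgroup.mul_mem
    · exact Subgroup.mem_sup_left ⟨h1, ⟨x.left, rfl⟩⟩
    · exact Subgroup.mem_sup_right (Subgroup.mem_map_of_mem _ h2)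

end AuxProofs

theorem btimes_inf
    (p : ℕ) [Fact p.Prime]
    (V : Type) [AddCommGroup V] [Module (ZMod p) V] [Finite V]
    (G : Type) [Group G] [Finite G] (hGp : IsPGroup p G)
    (ρ : G →* (V ≃ₗ[ZMod p] V)) (hfaithful : Function.Injective ρ)
    (A M : Subgroup (SDP ρ)) (hM : M ≤ Vsub ρ ∨ Vsub ρ ≤ M) :
    Btimes ρ (A ⊓ M) = Btimes ρ A ⊓ M := by
  open SemidirectProduct in
  ext x
  rw [Subgroup.mem_inf, mem_Btimes, mem_Btimes, Subgroup.mem_inf]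
  rcases hM with hM | hM
  · -- Case M ≤ V
    have hMright : ∀ y : SDP ρ, y ∈ M → y.right = 1 := by
      intro y hy
      obtain ⟨v, hv⟩ := hM hy
      rw [← hv]; rfl
    constructor
    · rintro ⟨⟨h1, h2⟩, h3⟩
      obtain ⟨a, ⟨haA, haM⟩, hr⟩ := h3
      have hx1 : x.right = 1 := by
        rw [← hr]; exact hMright a haM
      have hx : x = SemidirectProduct.inl x.left := by
        conv_lhs => rw [← inl_left_mul_inr_right x]
        rw [hx1]; simp
      refine ⟨⟨h1, ⟨1, A.one_mem, by simp [hx1]⟩⟩, ?_⟩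
      rw [hx]; exact h2
    · rintro ⟨⟨h1, h2⟩, h3⟩
      have hx1 : x.right = 1 := hMright x h3
      have hx : x = SemidirectProduct.inl x.left := by
        conv_lhs => rw [← inl_left_mul_inr_right x]
        rw [hx1]; simp
      refine ⟨⟨h1, hx ▸ h3⟩, ⟨1, ⟨A.one_mem, M.one_mem⟩, by simp [hx1]⟩⟩
  · -- Case V ≤ M
    have hker : ∀ y : SDP ρ, SemidirectProduct.rightHom y ∈ M.map SemidirectProduct.rightHom → y ∈ M := by
      intro y hy
      obtain ⟨m, hm, he⟩ := hy
      have hV : y * m⁻¹ ∈ Vsub ρ := by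
        rw [Vsub, range_inl_eq_ker_rightHom, MonoidHom.mem_ker]
        rw [map_mul, map_inv, he, mul_inv_cancel]
      have hyM : y * m⁻¹ ∈ M := hM hV
      have : y = (y * m⁻¹) * m := by group
      rw [this]; exact M.mul_mem hyM hm
    constructor
    · rintro ⟨⟨h1, _⟩, h2⟩
      obtain ⟨a, ⟨haA, haM⟩, hr⟩ := h2
      refine ⟨⟨h1, ⟨a, haA, hr⟩⟩, hker x ⟨a, haM, hr⟩⟩
    · rintro ⟨⟨h1, h2⟩, h3⟩
      obtain ⟨a, haA, hr⟩ := h2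
      have haM : a ∈ M := hker a ⟨x, h3, hr.symm⟩
      exact ⟨⟨h1, hM ⟨x.left, rfl⟩⟩, ⟨a, ⟨haA, haM⟩, hr⟩⟩
end

section
/- Let V be a finite elementary abelian p-group, G a finite p-group acting faithfully on V, and S = V ⋊ G. If V is an F-module for G, then 𝒜_×(S) is nonempty: there exists an abelian subgroup A of S of maximum order among abelian subgroups of S such that A = A_× and A is not contained in V. -/
section Aux

open SemidirectProduct

variable {p : ℕ} [Fact p.Prime]
variable {V : Type} [AddCommGroup V] [Module (ZMod p) V] [Finite V]
variable {G : Type} [Group G] [Finite G]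
variable (ρ : G →* (V ≃ₗ[ZMod p] V))

instance : Finite (SDP ρ) :=
  Finite.of_injective (fun x : SDP ρ => (x.left, x.right))
    (fun a b h => SemidirectProduct.ext (congrArg Prod.fst h) (congrArg Prod.snd h))

lemma mem_Vsub_iff {x : SDP ρ} : x ∈ Vsub ρ ↔ x.right = 1 := by
  constructor
  · rintro ⟨v, rfl⟩; rfl
  · intro h
    exact ⟨x.left, SemidirectProduct.ext rfl h.symm⟩

/-- The product subgroup `W ⋊ K` when `K` fixes `W` pointwise. -/
def prodSub (W : Subgroup (Multiplicative V)) (K : Subgroup G)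
    (hfix : ∀ g ∈ K, ∀ w ∈ W, phiOf ρ g w = w) : Subgroup (SDP ρ) where
  carrier := {x | x.left ∈ W ∧ x.right ∈ K}
  one_mem' := ⟨W.one_mem, K.one_mem⟩
  mul_mem' := by
    rintro a b ⟨ha1, ha2⟩ ⟨hb1, hb2⟩
    refine ⟨?_, K.mul_mem ha2 hb2⟩
    show a.left * phiOf ρ a.right b.left ∈ W
    rw [hfix a.right ha2 b.left hb1]
    exact W.mul_mem ha1 hb1
  inv_mem' := by
    rintro a ⟨ha1, ha2⟩
    refine ⟨?_, K.inv_mem ha2⟩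
    show phiOf ρ a.right⁻¹ a.left⁻¹ ∈ W
    rw [hfix a.right⁻¹ (K.inv_mem ha2) a.left⁻¹ (W.inv_mem ha1)]
    exact W.inv_mem ha1

lemma mem_prodSub {W : Subgroup (Multiplicative V)} {K : Subgroup G}
    {hfix : ∀ g ∈ K, ∀ w ∈ W, phiOf ρ g w = w} {x : SDP ρ} :
    x ∈ prodSub ρ W K hfix ↔ x.left ∈ W ∧ x.right ∈ K := Iff.rfl

lemma prodSub_comm {W : Subgroup (Multiplicative V)} {K : Subgroup G}
    {hfix : ∀ g ∈ K, ∀ w ∈ W, phiOf ρ g w = w}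
    (hK : ∀ x ∈ K, ∀ y ∈ K, x * y = y * x) :
    IsMulCommutative (prodSub ρ W K hfix) := by
  constructor
  constructor
  rintro ⟨a, ha1, ha2⟩ ⟨b, hb1, hb2⟩
  apply Subtype.ext
  show a * b = b * a
  apply SemidirectProduct.ext
  · show a.left * phiOf ρ a.right b.left = b.left * phiOf ρ b.right a.left
    rw [hfix a.right ha2 b.left hb1, hfix b.right hb2 a.left ha1, mul_comm]
  · exact hK a.right ha2 b.right hb2

lemma prodSub_card {W : Subgroup (Multiplicative V)} {K : Subgroup G}
    {hfix : ∀ g ∈ K, ∀ w ∈ W, phiOf ρ g w = w} :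
    Nat.card (prodSub ρ W K hfix) = Nat.card W * Nat.card K := by
  rw [← Nat.card_prod]
  refine Nat.card_congr ⟨fun x => (⟨x.1.left, x.2.1⟩, ⟨x.1.right, x.2.2⟩),
    fun y => ⟨⟨y.1.1, y.2.1⟩, y.1.2, y.2.2⟩, ?_, ?_⟩
  · rintro ⟨x, hx⟩; rfl
  · rintro ⟨⟨w, hw⟩, ⟨k, hk⟩⟩; rfl

lemma prodSub_Btimes {W : Subgroup (Multiplicative V)} {K : Subgroup G}
    {hfix : ∀ g ∈ K, ∀ w ∈ W, phiOf ρ g w = w} :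
    prodSub ρ W K hfix = Btimes ρ (prodSub ρ W K hfix) := by
  apply le_antisymm
  · intro x hx
    rw [← SemidirectProduct.inl_left_mul_inr_right x]
    apply Subgroup.mul_mem
    · apply Subgroup.mem_sup_left
      exact Subgroup.mem_inf.2 ⟨mem_prodSub ρ |>.2 ⟨hx.1, K.one_mem⟩, ⟨x.left, rfl⟩⟩
    · apply Subgroup.mem_sup_right
      exact ⟨x.right, ⟨x, hx, rfl⟩, rfl⟩
  · apply sup_le
    · exact inf_le_left
    · rintro x ⟨g, ⟨y, hy, rfl⟩, rfl⟩
      exact ⟨W.one_mem, hy.2⟩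

end Aux

open SemidirectProduct in
theorem ATimes_nonempty
    (p : ℕ) [Fact p.Prime]
    (V : Type) [AddCommGroup V] [Module (ZMod p) V] [Finite V]
    (G : Type) [Group G] [Finite G] (hGp : IsPGroup p G)
    (ρ : G →* (V ≃ₗ[ZMod p] V)) (hfaithful : Function.Injective ρ)
    -- `V` is an F-module for `G`
    (hF : ∃ E : Subgroup G, E ≠ ⊥ ∧ (∀ x ∈ E, ∀ y ∈ E, x * y = y * x) ∧
      (∀ x ∈ E, x ^ p = 1) ∧
      Nat.card V ≤ Nat.card E * Nat.card {v : V | ∀ g ∈ E, ρ g v = v}) :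
    -- `𝒜_×(S)` is nonempty
    ∃ A : Subgroup (SDP ρ),
      (IsMulCommutative A ∧
        ∀ B : Subgroup (SDP ρ), IsMulCommutative B → Nat.card B ≤ Nat.card A) ∧
      A = Btimes ρ A ∧ ¬ A ≤ Vsub ρ := by
  classical
  -- choose an abelian subgroup of maximal order
  obtain ⟨A, hAcomm, hAmax⟩ :
      ∃ A : Subgroup (SDP ρ), IsMulCommutative A ∧
        ∀ B : Subgroup (SDP ρ), IsMulCommutative B → Nat.card B ≤ Nat.card A := by
    have hbot : IsMulCommutative (⊥ : Subgroup (SDP ρ)) :=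
      ⟨⟨fun a b => Subtype.ext (by
        show (a : SDP ρ) * b = b * a
        rw [Subgroup.mem_bot.1 a.2, Subgroup.mem_bot.1 b.2])⟩⟩
    obtain ⟨A, hA, hmax⟩ := Set.Finite.exists_maximalFor
      (fun B : Subgroup (SDP ρ) => Nat.card B)
      {B : Subgroup (SDP ρ) | IsMulCommutative B} (Set.toFinite _) ⟨⊥, hbot⟩
    refine ⟨A, hA, fun B hB => ?_⟩
    by_contra h
    push_neg at h
    exact absurd (hmax hB h.le) (by show ¬ Nat.card B ≤ Nat.card A; omega)
  by_cases hAV : A ≤ Vsub ρ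
  · -- use the offender
    obtain ⟨E, hEne, hEcomm, _, hEcard⟩ := hF
    set W : Subgroup (Multiplicative V) :=
      { carrier := {v | ∀ g ∈ E, phiOf ρ g v = v}
        one_mem' := fun g _ => map_one _
        mul_mem' := fun {a b} ha hb g hg => by
          rw [map_mul, ha g hg, hb g hg]
        inv_mem' := fun {a} ha g hg => by rw [map_inv, ha g hg] } with hW
    have hfix : ∀ g ∈ E, ∀ w ∈ W, phiOf ρ g w = w := fun g hg w hw => hw g hg
    refine ⟨prodSub ρ W E hfix, ⟨prodSub_comm ρ hEcomm, fun B hB => ?_⟩,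
      prodSub_Btimes ρ, ?_⟩
    · -- maximality
      have h1 : Nat.card B ≤ Nat.card A := hAmax B hB
      have h2 : Nat.card A ≤ Nat.card V := by
        calc Nat.card A ≤ Nat.card (Vsub ρ) := Subgroup.card_le_of_le hAV
        _ = Nat.card (Multiplicative V) :=
          Nat.card_congr (Equiv.ofInjective _ SemidirectProduct.inl_injective).symm
        _ = Nat.card V := rfl
      have h3 : Nat.card W = Nat.card {v : V | ∀ g ∈ E, ρ g v = v} := by
        apply Nat.card_congr
        refine ⟨fun x => ⟨x.1.toAdd, fun g hg => ?_⟩, fun x => ⟨Multiplicative.ofAdd x.1,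
          fun g hg => ?_⟩, fun x => rfl, fun x => rfl⟩
        · have := x.2 g hg
          exact congrArg Multiplicative.toAdd this
        · exact congrArg Multiplicative.ofAdd (x.2 g hg)
      rw [prodSub_card, h3, mul_comm]
      omega
    · -- not contained in Vsub
      intro hle
      obtain ⟨g, hg, hgne⟩ : ∃ g ∈ E, g ≠ 1 := by
        by_contra h
        push_neg at h
        exact hEne (Subgroup.eq_bot_iff_forall E |>.2 h)
      have : (inr g : SDP ρ) ∈ prodSub ρ W E hfix := ⟨W.one_mem, hg⟩
      have := (mem_Vsub_iff ρ).1 (hle this)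
      exact hgne (by simpa using this)
  · -- A itself is not in V: replace it by A_×
    set W : Subgroup (Multiplicative V) := (Vsub ρ ⊓ A).comap inl with hW
    set K : Subgroup G := A.map rightHom with hK
    have hAc := hAcomm.is_comm.comm
    have hfix : ∀ g ∈ K, ∀ w ∈ W, phiOf ρ g w = w := by
      rintro g ⟨a, ha, rfl⟩ w hw
      have hwA : (inl w : SDP ρ) ∈ A := hw.2
      have := hAc ⟨a, ha⟩ ⟨inl w, hwA⟩
      have h2 : a * inl w = inl w * a := congrArg Subtype.val this
      have h3 := congrArg SemidirectProduct.left h2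
      simp only [SemidirectProduct.mul_left, SemidirectProduct.left_inl,
        SemidirectProduct.right_inl, map_one, MulAut.one_apply] at h3
      -- h3 : a.left * phiOf ρ a.right w = w * a.left
      have : phiOf ρ a.right w = w := by
        have := h3
        rw [mul_comm w a.left] at this
        exact mul_left_cancel this
      simpa [rightHom] using this
    have hKcomm : ∀ x ∈ K, ∀ y ∈ K, x * y = y * x := by
      rintro x ⟨a, ha, rfl⟩ y ⟨b, hb, rfl⟩
      have := hAc ⟨a, ha⟩ ⟨b, hb⟩
      have h2 : a * b = b * a := congrArg Subtype.val this
      rw [← map_mul, ← map_mul, h2]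
    have hcard : Nat.card A ≤ Nat.card (prodSub ρ W K hfix) := by
      rw [prodSub_card]
      have h1 : Nat.card A = Nat.card (A ⧸ (rightHom.ker.subgroupOf A)) *
          Nat.card (rightHom.ker.subgroupOf A) :=
        Subgroup.card_eq_card_quotient_mul_card_subgroup _
      have h2 : Nat.card (A ⧸ ((rightHom : SDP ρ →* G).ker.subgroupOf A)) = Nat.card K := by
        rw [← MonoidHom.ker_restrict A rightHom]
        refine Nat.card_congr ?_
        refine (QuotientGroup.quotientKerEquivRange ((rightHom : SDP ρ →* G).domRestrict A)).toEquiv.trans ?_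
        rw [MonoidHom.restrict_range]
      have h3 : Nat.card ((rightHom : SDP ρ →* G).ker.subgroupOf A) = Nat.card W := by
        refine Nat.card_congr ?_
        refine ⟨fun x => ⟨x.1.1.left, ?_⟩, fun w => ⟨⟨inl w.1, w.2.2⟩, ?_⟩, ?_, ?_⟩
        · have hker : x.1.1 ∈ (rightHom : SDP ρ →* G).ker := x.2
          have hr : x.1.1.right = 1 := hker
          constructor
          · exact (mem_Vsub_iff ρ).2 rfl
          · have : (inl x.1.1.left : SDP ρ) = x.1.1 := by
              apply SemidirectProduct.ext
              · rfl
              · exact hr.symm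
            rw [this]; exact x.1.2
        · show (inl w.1 : SDP ρ) ∈ (rightHom : SDP ρ →* G).ker
          simp [MonoidHom.mem_ker]
        · rintro ⟨⟨x, hxA⟩, hxk⟩
          have hr : x.right = 1 := hxk
          apply Subtype.ext; apply Subtype.ext
          exact SemidirectProduct.ext rfl hr.symm
        · rintro ⟨w, hw⟩; rfl
      rw [h1, h2, h3, mul_comm]
    refine ⟨prodSub ρ W K hfix, ⟨prodSub_comm ρ hKcomm, fun B hB => le_trans (hAmax B hB) hcard⟩,
      prodSub_Btimes ρ, ?_⟩
    intro hle
    apply hAV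
    intro a ha
    have hKa : a.right ∈ K := ⟨a, ha, rfl⟩
    have : (inr a.right : SDP ρ) ∈ prodSub ρ W K hfix := ⟨W.one_mem, hKa⟩
    have hr : a.right = 1 := by simpa using (mem_Vsub_iff ρ).1 (hle this)
    exact (mem_Vsub_iff ρ).2 hr
end

section
/- Let p be a prime and n ≥ 1. Suppose a_1, …, a_k are pairwise commuting elements of GL(n, 𝔽_p) with (a_i − 1)² = 0 for each i. Then (a_1 a_2 ⋯ a_k − 1)^{k+1} = 0; that is, the minimal polynomial of the product a_1 ⋯ a_k has degree at most k + 1. -/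
lemma aux_step {R : Type*} [Ring R] {x y : R} (h : Commute x y) {k : ℕ}
    (hx : x ^ 2 = 0) (hy : y ^ (k + 1) = 0) : (x + y) ^ (k + 2) = 0 := by
  rw [h.add_pow]
  apply Finset.sum_eq_zero
  intro i _
  rcases le_or_gt 2 i with h2 | h2
  · obtain ⟨j, rfl⟩ := Nat.exists_eq_add_of_le h2
    rw [pow_add, hx, zero_mul, zero_mul, zero_mul]
  · have hek : k + 2 - i = (k + 1) + (1 - i) := by omega
    rw [hek, pow_add, hy, zero_mul, mul_zero, zero_mul]

lemma aux_prod {R : Type*} [Ring R] : ∀ (k : ℕ) (A : Fin k → R),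
    (∀ i j, Commute (A i) (A j)) → (∀ i, (A i - 1) ^ 2 = 0) →
    ((List.ofFn A).prod - 1) ^ (k + 1) = 0 := by
  intro k
  induction k with
  | zero => intro A _ _; simp
  | succ k ih =>
    intro A hcomm hquad
    rw [List.ofFn_succ, List.prod_cons]
    set P := (List.ofFn fun i => A i.succ).prod with hP
    have hAP : Commute (A 0) P := Commute.list_prod_right _ _ (by
      intro x hx
      rw [List.mem_ofFn] at hx
      obtain ⟨i, rfl⟩ := hx
      exact hcomm 0 i.succ)
    have h1 : Commute (A 0 - 1) P := hAP.sub_left (Commute.one_left P)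
    have key : A 0 * P - 1 = (A 0 - 1) * P + (P - 1) := by noncomm_ring
    rw [key]
    have hx2 : ((A 0 - 1) * P) ^ 2 = 0 := by
      have e : (A 0 - 1) * P * ((A 0 - 1) * P) = (A 0 - 1) ^ 2 * P ^ 2 := by
        rw [sq, sq, mul_assoc, ← mul_assoc P, ← h1.eq, mul_assoc, ← mul_assoc]
      rw [sq, e, hquad 0, zero_mul]
    have hcomm' : Commute ((A 0 - 1) * P) (P - 1) :=
      (h1.mul_left (Commute.refl P)).sub_right (Commute.one_right _)
    have hy : (P - 1) ^ (k + 1) = 0 :=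
      ih _ (fun i j => hcomm i.succ j.succ) (fun i => hquad i.succ)
    exact aux_step hcomm' hx2 hy

theorem commuting_quadratics_product_bound
    (p : ℕ) [Fact p.Prime] (n : ℕ) (hn : 1 ≤ n) (k : ℕ)
    (a : Fin k → Matrix.GeneralLinearGroup (Fin n) (ZMod p))
    (hcomm : ∀ i j, Commute (a i) (a j))
    (hquad : ∀ i, ((a i : Matrix (Fin n) (Fin n) (ZMod p)) - 1) ^ 2 = 0) :
    ((((List.ofFn a).prod : Matrix.GeneralLinearGroup (Fin n) (ZMod p)) :
        Matrix (Fin n) (Fin n) (ZMod p)) - 1) ^ (k + 1) = 0 := by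
  have hcoe : (((List.ofFn a).prod : Matrix.GeneralLinearGroup (Fin n) (ZMod p)) :
      Matrix (Fin n) (Fin n) (ZMod p))
      = (List.ofFn fun i => ((a i : Matrix (Fin n) (Fin n) (ZMod p)))).prod := by
    rw [show ((List.ofFn fun i => ((a i : Matrix (Fin n) (Fin n) (ZMod p))))) =
        (List.ofFn a).map (Units.coeHom _) by rw [List.map_ofFn]; rfl]
    exact (List.prod_hom _ (Units.coeHom _)).symm
  rw [hcoe]
  exact aux_prod k _ (fun i j => by
      show _ * _ = _ * _
      exact_mod_cast (hcomm i j).eq) hquad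
end

section
/- Let p be a prime. Suppose V is a finite elementary abelian p-group and G is a finite p-group acting faithfully on V. Let a ∈ G be a quadratic element, let x ∈ G, and suppose c := [a, x] ≠ 1 centralizes both a and x. Then c is a quadratic element on V, i.e., c ≠ 1 and (c − 1)² = 0 on V. -/
/-!
STATEMENT 12 (Lemma 5.1, Green–Héthelyi–Lilienthal):
Let `p` be a prime, `V` a finite elementary abelian `p`-group, and `G` a finite
`p`-group acting faithfully on `V`.  Let `a ∈ G` be a quadratic element, let `x ∈ G`,
and suppose `c := [a, x] = a⁻¹x⁻¹ax ≠ 1` centralizes both `a` and `x`.  Then `c` is a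
quadratic element on `V`: `c ≠ 1` and `(c − 1)² = 0` on `V`.
-/

/-- Auxiliary pure-ring lemma. -/
lemma quadratic_commutator_aux (p : ℕ) [Fact p.Prime] {R : Type} [Ring R]
    [Algebra (ZMod p) R]
    (A Ai X Xi : R)
    (hAAi : A * Ai = 1) (hAiA : Ai * A = 1) (hXXi : X * Xi = 1) (hXiX : Xi * X = 1)
    (hA2 : (A - 1) ^ 2 = 0)
    (hca : (Ai * Xi * A * X) * A = A * (Ai * Xi * A * X))
    (hEq : Xi * Xi * A * X * X = A * (Ai * Xi * A * X) * (Ai * Xi * A * X)) :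
    ((Ai * Xi * A * X) - 1) ^ 2 = 0 := by
  set B : R := Xi * A * X with hB
  have hC : Ai * Xi * A * X = Ai * B := by rw [hB]; noncomm_ring
  -- B is quadratic
  have hconj : ∀ Y Yi : R, Y * Yi = 1 → Yi * Y = 1 →
      ((Yi * A * Y) - 1) * ((Yi * A * Y) - 1) = 0 := by
    intro Y Yi hYYi hYiY
    have h1 : (Yi * A * Y) - 1 = Yi * (A - 1) * Y := by
      rw [mul_sub, sub_mul, mul_one, hYiY]
    rw [h1]
    have h2 : Yi * (A - 1) * Y * (Yi * (A - 1) * Y)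
        = Yi * (A - 1) * (Y * Yi) * ((A - 1) * Y) := by noncomm_ring
    rw [h2, hYYi, mul_one]
    have h3 : Yi * (A - 1) * ((A - 1) * Y) = Yi * ((A - 1) ^ 2 * Y) := by noncomm_ring
    rw [h3, hA2, zero_mul, mul_zero]
  have hvv : (B - 1) * (B - 1) = 0 := by rw [hB]; exact hconj X Xi hXXi hXiX
  have huu : (A - 1) * (A - 1) = 0 := by rw [← sq]; exact hA2
  -- A and B commute
  have hca' : (Ai * B) * A = A * (Ai * B) := by rw [← hC]; exact hca
  have hAiBA : Ai * B * A = B := by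
    rw [hca', ← mul_assoc, hAAi, one_mul]
  have hAB : A * B = B * A := by
    calc A * B = A * Ai * B * A := by rw [mul_assoc A Ai B, mul_assoc, hAiBA]
    _ = B * A := by rw [hAAi, one_mul]
  have hAiB : Ai * B = B * Ai := by
    calc Ai * B = Ai * B * (A * Ai) := by rw [hAAi, mul_one]
    _ = Ai * (A * B) * Ai := by rw [hAB]; noncomm_ring
    _ = B * Ai := by rw [← mul_assoc, hAiA, one_mul]
  -- (B * Ai * B - 1)^2 = 0
  have hQ0 : ((Xi * Xi * A * (X * X)) - 1) * ((Xi * Xi * A * (X * X)) - 1) = 0 := by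
    have h4 : (X * X) * (Xi * Xi) = 1 := by
      rw [show X * X * (Xi * Xi) = X * (X * Xi) * Xi by noncomm_ring, hXXi, mul_one, hXXi]
    have h5 : (Xi * Xi) * (X * X) = 1 := by
      rw [show Xi * Xi * (X * X) = Xi * (Xi * X) * X by noncomm_ring, hXiX, mul_one, hXiX]
    have := hconj (X * X) (Xi * Xi) h4 h5
    rw [show Xi * Xi * A * (X * X) = (Xi * Xi) * A * (X * X) by noncomm_ring]
    exact this
  have hQ : ((B * Ai * B) - 1) * ((B * Ai * B) - 1) = 0 := by
    have h6 : Xi * Xi * A * (X * X) = B * Ai * B := by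
      have h7 : Xi * Xi * A * (X * X) = Xi * Xi * A * X * X := by noncomm_ring
      rw [h7, hEq, hC]
      calc A * (Ai * B) * (Ai * B) = (A * Ai) * B * Ai * B := by noncomm_ring
      _ = B * Ai * B := by rw [hAAi, one_mul]
    rw [← h6]; exact hQ0
  -- (B*B - A)^2 = 0
  have e1 : A * ((B * Ai * B) - 1) = B * B - A := by
    rw [mul_sub, mul_one]
    congr 1
    calc A * (B * Ai * B) = (A * B) * Ai * B := by noncomm_ring
    _ = B * (A * Ai) * B := by rw [hAB]; noncomm_ring
    _ = B * B := by rw [hAAi, mul_one]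
  have e2 : ((B * Ai * B) - 1) * A = B * B - A := by
    rw [sub_mul, one_mul]
    congr 1
    calc (B * Ai * B) * A = B * Ai * (B * A) := by noncomm_ring
    _ = B * (Ai * A) * B := by rw [← hAB]; noncomm_ring
    _ = B * B := by rw [hAiA, mul_one]
  have hss : (B * B - A) * (B * B - A) = 0 := by
    have h8 : A * (((B * Ai * B) - 1) * ((B * Ai * B) - 1)) * A
        = (B * B - A) * (B * B - A) := by
      calc A * (((B * Ai * B) - 1) * ((B * Ai * B) - 1)) * A
          = (A * ((B * Ai * B) - 1)) * (((B * Ai * B) - 1) * A) := by noncomm_ring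
      _ = (B * B - A) * (B * B - A) := by rw [e1, e2]
    rw [← h8, hQ, mul_zero, zero_mul]
  -- commutator of u = A-1, v = B-1
  have huv : (A - 1) * (B - 1) = (B - 1) * (A - 1) := by
    have l1 : (A - 1) * (B - 1) = A * B - A - B + 1 := by noncomm_ring
    have l2 : (B - 1) * (A - 1) = B * A - A - B + 1 := by noncomm_ring
    rw [l1, l2, hAB]
  -- key identity: 2 * (uv + vu) = stuff that vanishes
  have key : (2 : R) * ((A - 1) * (B - 1) + (B - 1) * (A - 1)) =
      -((B * B - A) * (B * B - A)) + 4 * ((B - 1) * (B - 1))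
        + 4 * (((B - 1) * (B - 1)) * (B - 1))
        + ((B - 1) * (B - 1)) * ((B - 1) * (B - 1))
        + (A - 1) * (A - 1)
        - ((B - 1) * (B - 1)) * (A - 1)
        - (A - 1) * ((B - 1) * (B - 1)) := by
    noncomm_ring
  rw [hss, hvv, huu] at key
  simp only [neg_zero, mul_zero, zero_mul, add_zero, zero_add, sub_zero] at key
  -- hence uv + vu = 0
  have hS : (A - 1) * (B - 1) + (B - 1) * (A - 1) = 0 := by
    by_cases h2 : (2 : ZMod p) = 0
    · rw [← huv, ← two_nsmul]
      have : (2 : ℕ) • ((A - 1) * (B - 1)) = (2 : ZMod p) • ((A - 1) * (B - 1)) := by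
        rw [← Nat.cast_smul_eq_nsmul (ZMod p)]; norm_num
      rw [this, h2, zero_smul]
    · have h2' : ((2 : ZMod p)) • ((A - 1) * (B - 1) + (B - 1) * (A - 1)) = 0 := by
        rw [show ((2 : ZMod p)) = ((2 : ℕ) : ZMod p) by norm_num,
          Nat.cast_smul_eq_nsmul, nsmul_eq_mul, Nat.cast_ofNat]
        exact key
      rcases smul_eq_zero.mp h2' with h | h
      · exact absurd h h2
      · exact h
  -- conclude
  rw [hC, sq]
  have f1 : Ai * B - 1 = Ai * (B - A) := by rw [mul_sub, hAiA]
  have f2 : Ai * (B - A) = (B - A) * Ai := by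
    rw [mul_sub, sub_mul, hAiB, hAiA, ← hAAi]
  rw [f1]
  calc Ai * (B - A) * (Ai * (B - A))
      = Ai * ((B - A) * Ai) * (B - A) := by noncomm_ring
  _ = Ai * (Ai * (B - A)) * (B - A) := by rw [← f2]
  _ = (Ai * Ai) * ((B - A) * (B - A)) := by noncomm_ring
  _ = 0 := by
      have g1 : (B - A) * (B - A) =
          (B - 1) * (B - 1) + (A - 1) * (A - 1)
            - ((A - 1) * (B - 1) + (B - 1) * (A - 1)) := by noncomm_ring
      rw [g1, hvv, huu, hS]
      simp

theorem quadratic_commutator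
    (p : ℕ) [Fact p.Prime]
    (V : Type) [AddCommGroup V] [Module (ZMod p) V] [Finite V]
    (G : Type) [Group G] [Finite G] (hGp : IsPGroup p G)
    (ρ : G →* (V ≃ₗ[ZMod p] V)) (hfaithful : Function.Injective ρ)
    (a x : G)
    -- `a` is a quadratic element
    (ha1 : a ≠ 1) (haq : ((ρ a : Module.End (ZMod p) V) - 1) ^ 2 = 0)
    -- `c = [a, x] ≠ 1` centralizes both `a` and `x`
    (hc1 : a⁻¹ * x⁻¹ * a * x ≠ 1)
    (hca : Commute (a⁻¹ * x⁻¹ * a * x) a)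
    (hcx : Commute (a⁻¹ * x⁻¹ * a * x) x) :
    -- `c` is a quadratic element on `V`
    a⁻¹ * x⁻¹ * a * x ≠ 1 ∧
      ((ρ (a⁻¹ * x⁻¹ * a * x) : Module.End (ZMod p) V) - 1) ^ 2 = 0 := by
  refine ⟨hc1, ?_⟩
  set φ : G →* Module.End (ZMod p) V :=
    (LinearEquiv.automorphismGroup.toLinearMapMonoidHom).comp ρ with hφ
  have hcoe : ∀ g : G, (ρ g : Module.End (ZMod p) V) = φ g := fun g => rfl
  rw [hcoe]
  -- group identity: x⁻² a x² = a c² with c = [a,x]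
  have h4 : x⁻¹ * a * x = a * (a⁻¹ * x⁻¹ * a * x) := by group
  have hgrp : x⁻¹ * x⁻¹ * a * x * x
      = a * (a⁻¹ * x⁻¹ * a * x) * (a⁻¹ * x⁻¹ * a * x) := by
    calc x⁻¹ * x⁻¹ * a * x * x = x⁻¹ * (x⁻¹ * a * x) * x := by group
    _ = x⁻¹ * (a * (a⁻¹ * x⁻¹ * a * x)) * x := by rw [h4]
    _ = x⁻¹ * a * ((a⁻¹ * x⁻¹ * a * x) * x) := by group
    _ = x⁻¹ * a * (x * (a⁻¹ * x⁻¹ * a * x)) := by rw [hcx.eq]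
    _ = (x⁻¹ * a * x) * (a⁻¹ * x⁻¹ * a * x) := by group
    _ = a * (a⁻¹ * x⁻¹ * a * x) * (a⁻¹ * x⁻¹ * a * x) := by rw [h4]
  have hEq := congrArg φ hgrp
  have hca' := congrArg φ hca.eq
  simp only [map_mul] at hEq hca'
  simp only [map_mul]
  refine quadratic_commutator_aux p (φ a) (φ a⁻¹) (φ x) (φ x⁻¹) ?_ ?_ ?_ ?_ ?_ hca' hEq
  · rw [← map_mul, mul_inv_cancel, map_one]
  · rw [← map_mul, inv_mul_cancel, map_one]
  · rw [← map_mul, mul_inv_cancel, map_one]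
  · rw [← map_mul, inv_mul_cancel, map_one]
  · exact haq
end

section
/- Let p be a prime, V a finite-dimensional vector space over 𝔽_p, and G a subgroup of GL(V). Suppose b ∈ G satisfies (b − 1)² = 0 and the normal closure W = ⟨b^G⟩ of b in G is abelian. Then for any elements x_1, …, x_k ∈ G, the left-normed iterated commutator z = [b, x_1, x_2, …, x_k] satisfies (z − 1)^{2^k + 1} = 0 on V; in particular the minimal polynomial of z on V has degree at most 2^k + 1. -/
section helpers
variable {R : Type*} [Ring R]

private lemma pow_zero_of_le' {x : R} {m n : ℕ} (h : m ≤ n) (hx : x ^ m = 0) : x ^ n = 0 := by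
  rw [← Nat.add_sub_cancel' h, pow_add, hx, zero_mul]

private lemma conj_nil (u : Rˣ) (a : R) (m : ℕ) (h : (a - 1) ^ m = 0) :
    (((u⁻¹ : Rˣ) : R) * a * u - 1) ^ m = 0 := by
  have key : ((u⁻¹ : Rˣ) : R) * a * u - 1 = ((u⁻¹ : Rˣ) : R) * (a - 1) * u := by
    rw [mul_sub, mul_one, sub_mul, Units.inv_mul]
  rw [key]
  have hpow : ∀ n : ℕ, (((u⁻¹ : Rˣ) : R) * (a - 1) * u) ^ n
      = ((u⁻¹ : Rˣ) : R) * (a - 1) ^ n * u := by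
    intro n
    induction n with
    | zero => simp
    | succ n ih =>
        rw [pow_succ, ih, pow_succ]
        have : ((u⁻¹ : Rˣ) : R) * (a-1)^n * (u : R) * (((u⁻¹ : Rˣ) : R) * (a - 1) * u)
            = ((u⁻¹ : Rˣ) : R) * (a-1)^n * ((u : R) * ((u⁻¹ : Rˣ) : R)) * (a - 1) * u := by
          noncomm_ring
        rw [this, Units.mul_inv, mul_one]
        noncomm_ring
  rw [hpow, h, mul_zero, zero_mul]

private lemma inv_nil (u : Rˣ) (m : ℕ) (h : ((u : R) - 1) ^ m = 0) :
    (((u⁻¹ : Rˣ) : R) - 1) ^ m = 0 := by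
  have key : ((u⁻¹ : Rˣ) : R) - 1 = ((u⁻¹ : Rˣ) : R) * (-((u : R) - 1)) := by
    rw [mul_neg, mul_sub, mul_one, Units.inv_mul]; noncomm_ring
  have hc : Commute ((u⁻¹ : Rˣ) : R) (-((u : R) - 1)) := by
    have h0 : Commute ((u⁻¹ : Rˣ) : R) (u : R) := by
      unfold Commute SemiconjBy; rw [Units.inv_mul, Units.mul_inv]
    exact ((h0.sub_right (Commute.one_right _)).neg_right)
  rw [key, hc.mul_pow, neg_pow, h, mul_zero, mul_zero]

private lemma prod_nil (a c : R) (h : Commute a c) (m n : ℕ)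
    (ha : (a - 1) ^ (m + 1) = 0) (hc : (c - 1) ^ (n + 1) = 0) :
    (a * c - 1) ^ (m + n + 1) = 0 := by
  have key : a * c - 1 = (a - 1) * c + (c - 1) := by noncomm_ring
  have h1 : Commute (a - 1) c := h.sub_left (Commute.one_left c)
  have h2 : Commute ((a - 1) * c) (c - 1) :=
    ((h1.sub_right (Commute.one_right _)).mul_left
      ((Commute.refl c).sub_right (Commute.one_right c)))
  rw [key, h2.add_pow]
  apply Finset.sum_eq_zero
  intro i hi
  rcases le_or_gt (m + 1) i with hle | hlt
  · have : ((a - 1) * c) ^ i = (a - 1) ^ i * c ^ i := h1.mul_pow i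
    rw [this, pow_zero_of_le' hle ha, zero_mul, zero_mul, zero_mul]
  · have hle2 : n + 1 ≤ m + n + 1 - i := by omega
    rw [pow_zero_of_le' hle2 hc, mul_zero, zero_mul]
end helpers

theorem iterated_commutator_minpoly_bound
    (p : ℕ) [Fact p.Prime]
    (V : Type) [AddCommGroup V] [Module (ZMod p) V] [FiniteDimensional (ZMod p) V]
    -- `G` a subgroup of `GL(V) = (End V)ˣ`
    (G : Subgroup (Module.End (ZMod p) V)ˣ)
    (b : (Module.End (ZMod p) V)ˣ) (hbG : b ∈ G)
    -- `(b − 1)² = 0`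
    (hb : ((b : Module.End (ZMod p) V) - 1) ^ 2 = 0)
    -- the normal closure `W = ⟨b^G⟩` of `b` in `G` is abelian
    (hW : ∀ x ∈ Subgroup.closure {w : (Module.End (ZMod p) V)ˣ | ∃ g ∈ G, w = g⁻¹ * b * g},
        ∀ y ∈ Subgroup.closure {w : (Module.End (ZMod p) V)ˣ | ∃ g ∈ G, w = g⁻¹ * b * g},
        x * y = y * x)
    (k : ℕ) (x : Fin k → (Module.End (ZMod p) V)ˣ) (hx : ∀ i, x i ∈ G) :
    -- `z = [b, x_1, …, x_k]` satisfies `(z − 1)^{2^k + 1} = 0`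
    ((((List.ofFn x).foldl (fun z y => z⁻¹ * y⁻¹ * z * y) b :
        (Module.End (ZMod p) V)ˣ) : Module.End (ZMod p) V) - 1) ^ (2 ^ k + 1) = 0 := by
  let E := Module.End (ZMod p) V
  let U := Eˣ
  set S : Set U := {w : U | ∃ g ∈ G, w = g⁻¹ * b * g} with hS
  set W : Subgroup U := Subgroup.closure S with hWdef
  -- W is invariant under conjugation by G
  have hWconj : ∀ g ∈ G, ∀ w ∈ W, g⁻¹ * w * g ∈ W := by
    intro g hg w hw
    induction hw using Subgroup.closure_induction with
    | mem s hs =>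
        obtain ⟨h, hh, rfl⟩ := hs
        apply Subgroup.subset_closure
        refine ⟨h * g, mul_mem hh hg, by group⟩
    | one => simpa using one_mem W
    | mul s t _ _ hs ht =>
        have : g⁻¹ * (s * t) * g = (g⁻¹ * s * g) * (g⁻¹ * t * g) := by group
        rw [this]; exact mul_mem hs ht
    | inv s _ hs =>
        have : g⁻¹ * s⁻¹ * g = (g⁻¹ * s * g)⁻¹ := by simp [mul_assoc]
        rw [this]; exact inv_mem hs
  have hbW : b ∈ W := Subgroup.subset_closure ⟨1, one_mem G, by group⟩
  -- main induction on the list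
  have aux : ∀ (l : List U), (∀ y ∈ l, y ∈ G) → ∀ (a : U), a ∈ W → ∀ n : ℕ,
      ((a : E) - 1) ^ (n + 1) = 0 →
      (l.foldl (fun z y => z⁻¹ * y⁻¹ * z * y) a ∈ W ∧
        (((l.foldl (fun z y => z⁻¹ * y⁻¹ * z * y) a : U) : E) - 1) ^ (2 ^ l.length * n + 1) = 0) := by
    intro l
    induction l with
    | nil =>
        intro _ a ha n hn
        refine ⟨ha, ?_⟩
        simpa using hn
    | cons y t ih =>
        intro hl a ha n hn
        have hy : y ∈ G := hl y List.mem_cons_self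
        set a' : U := a⁻¹ * y⁻¹ * a * y with ha'def
        have hconjW : y⁻¹ * a * y ∈ W := hWconj y hy a ha
        have haW' : a' ∈ W := by
          have heq : a' = a⁻¹ * (y⁻¹ * a * y) := by
            rw [ha'def]; simp [mul_assoc]
          rw [heq]; exact mul_mem (inv_mem ha) hconjW
        -- nilpotency of a'
        have hcu : a⁻¹ * (y⁻¹ * a * y) = (y⁻¹ * a * y) * a⁻¹ :=
          hW a⁻¹ (inv_mem ha) (y⁻¹ * a * y) hconjW
        have hcomm : Commute ((a⁻¹ : U) : E) (((y⁻¹ * a * y : U) : E)) := by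
          unfold Commute SemiconjBy
          rw [← Units.val_mul, ← Units.val_mul, hcu]
        have hinv : (((a⁻¹ : U) : E) - 1) ^ (n + 1) = 0 := inv_nil a (n + 1) hn
        have hconj : (((y⁻¹ * a * y : U) : E) - 1) ^ (n + 1) = 0 := by
          have := conj_nil y ((a : U) : E) (n + 1) hn
          exact this
        have hn' : ((a' : E) - 1) ^ (2 * n + 1) = 0 := by
          have heq : (a' : E) = ((a⁻¹ : U) : E) * ((y⁻¹ * a * y : U) : E) := by
            rw [ha'def]; push_cast [Units.val_mul]; noncomm_ring
          have := prod_nil _ _ hcomm n n hinv hconj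
          rw [heq]
          have harith : 2 * n + 1 = n + n + 1 := by ring
          rw [harith]; exact this
        have hrec := ih (fun z hz => hl z (List.mem_cons_of_mem y hz)) a' haW' (2 * n) hn'
        constructor
        · exact hrec.1
        · have harith : 2 ^ (y :: t).length * n + 1 = 2 ^ t.length * (2 * n) + 1 := by
            simp [List.length_cons, pow_succ]; ring
          rw [harith]
          exact hrec.2
  have := (aux (List.ofFn x) (by
      intro y hy
      obtain ⟨i, rfl⟩ := List.mem_ofFn.mp hy
      exact hx i) b hbW 1 (by simpa using hb)).2
  simpa [List.length_ofFn] using this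
end

section
/- Let S be a finite p-group and A an abelian subgroup of S. Let v ∈ S be an element for which N = [v, A] (the subgroup generated by the commutators [v, a] with a ∈ A) is abelian, and set A* = N·C_A(N). Then A* is an abelian subgroup of S and |A ∩ M| ≤ |A* ∩ M| for every normal subgroup M of S; in particular |A| ≤ |A*|. -/
/-!
STATEMENT 14 (Lemma 2.8(a), Huppert–Blackburn):
Let `S` be a finite `p`-group and `A` an abelian subgroup of `S`.  Let `v ∈ S` be an
element for which `N = [v, A]` (the subgroup generated by the commutators
`[v, a] = v⁻¹a⁻¹va`, `a ∈ A`) is abelian, and set `A* = N·C_A(N)`.  Then `A*` is an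
abelian subgroup of `S` and `|A ∩ M| ≤ |A* ∩ M|` for every normal subgroup `M` of
`S`; in particular `|A| ≤ |A*|`.
-/

/-- `N = [v, A]`: the subgroup generated by the commutators `[v, a] = v⁻¹a⁻¹va`, `a ∈ A`. -/
def commSubgroup {S : Type} [Group S] (v : S) (A : Subgroup S) : Subgroup S :=
  Subgroup.closure {x : S | ∃ a ∈ A, x = v⁻¹ * a⁻¹ * v * a}

/-- `A* = N·C_A(N)` where `N = [v, A]`. -/
def replacementSubgroup {S : Type} [Group S] (v : S) (A : Subgroup S) : Subgroup S :=
  commSubgroup v A ⊔ (A ⊓ Subgroup.centralizer ((commSubgroup v A : Subgroup S) : Set S))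

theorem replacement_lemma_a
    (p : ℕ) [Fact p.Prime]
    (S : Type) [Group S] [Finite S] (hS : IsPGroup p S)
    (A : Subgroup S) (hA : IsMulCommutative A) (v : S)
    -- `N = [v, A]` is abelian
    (hN : ∀ x ∈ commSubgroup v A, ∀ y ∈ commSubgroup v A, x * y = y * x) :
    -- `A*` is abelian, `|A ∩ M| ≤ |A* ∩ M|` for all `M ⊴ S`, and `|A| ≤ |A*|`
    IsMulCommutative (replacementSubgroup v A) ∧
      (∀ M : Subgroup S, M.Normal →
        Nat.card ↥(A ⊓ M) ≤ Nat.card ↥(replacementSubgroup v A ⊓ M)) ∧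
      Nat.card A ≤ Nat.card (replacementSubgroup v A) := by
  classical
  haveI := hA
  set N : Subgroup S := commSubgroup v A with hNdef
  set C : Subgroup S := A ⊓ Subgroup.centralizer (N : Set S) with hCdef
  have hrep : replacementSubgroup v A = N ⊔ C := rfl
  -- generators of N
  have hgen : ∀ a ∈ A, v⁻¹ * a⁻¹ * v * a ∈ N := fun a ha =>
    Subgroup.subset_closure ⟨a, ha, rfl⟩
  -- N centralizes N
  have hNle : N ≤ Subgroup.centralizer (N : Set S) := fun x hx =>
    Subgroup.mem_centralizer_iff.mpr fun y hy => hN y hy x hx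
  -- ★ : if `d ∈ A` and `[v,d] ∈ A` then `d` centralizes `N`.
  have star : ∀ d ∈ A, v⁻¹ * d⁻¹ * v * d ∈ A → d ∈ Subgroup.centralizer (N : Set S) := by
    intro d hd hdd
    have key : ∀ a ∈ A, (v⁻¹ * a⁻¹ * v * a) * d = d * (v⁻¹ * a⁻¹ * v * a) := by
      intro a ha
      have h1 : a * d = d * a := Subgroup.mul_comm_of_mem_isMulCommutative (H := A) ha hd
      have h2 : (v⁻¹ * d⁻¹ * v * d) * a = a * (v⁻¹ * d⁻¹ * v * d) :=
        Subgroup.mul_comm_of_mem_isMulCommutative (H := A) hdd ha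
      have h3 : (v⁻¹ * a⁻¹ * v * a) * (v⁻¹ * d⁻¹ * v * d)
          = (v⁻¹ * d⁻¹ * v * d) * (v⁻¹ * a⁻¹ * v * a) := hN _ (hgen a ha) _ (hgen d hd)
      have E : (v⁻¹ * d⁻¹ * v * d) * (d⁻¹ * (v⁻¹ * a⁻¹ * v * a) * d)
          = (v⁻¹ * a⁻¹ * v * a) * (a⁻¹ * (v⁻¹ * d⁻¹ * v * d) * a) := by
        calc (v⁻¹ * d⁻¹ * v * d) * (d⁻¹ * (v⁻¹ * a⁻¹ * v * a) * d)
            = v⁻¹ * (a * d)⁻¹ * v * (a * d) := by group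
          _ = v⁻¹ * (d * a)⁻¹ * v * (d * a) := by rw [h1]
          _ = (v⁻¹ * a⁻¹ * v * a) * (a⁻¹ * (v⁻¹ * d⁻¹ * v * d) * a) := by group
      have h2' : a⁻¹ * (v⁻¹ * d⁻¹ * v * d) * a = v⁻¹ * d⁻¹ * v * d := by
        rw [mul_assoc, h2]; group
      rw [h2', h3] at E
      have h4 : d⁻¹ * (v⁻¹ * a⁻¹ * v * a) * d = v⁻¹ * a⁻¹ * v * a := mul_left_cancel E
      calc (v⁻¹ * a⁻¹ * v * a) * d = d * (d⁻¹ * (v⁻¹ * a⁻¹ * v * a) * d) := by group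
        _ = d * (v⁻¹ * a⁻¹ * v * a) := by rw [h4]
    have hcl : N ≤ Subgroup.centralizer ({d} : Set S) := by
      rw [hNdef]
      apply (Subgroup.closure_le _).mpr
      rintro x ⟨a, ha, rfl⟩
      rw [SetLike.mem_coe, Subgroup.mem_centralizer_iff]
      rintro g hg
      rw [Set.mem_singleton_iff] at hg
      subst hg
      exact (key a ha).symm
    rw [Subgroup.mem_centralizer_iff]
    intro h hh
    have := Subgroup.mem_centralizer_iff.mp (hcl hh) d (Set.mem_singleton d)
    exact this.symm
  -- The main counting claim
  have main : ∀ M : Subgroup S, M.Normal →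
      Nat.card ↥(A ⊓ M) ≤ Nat.card ↥((N ⊔ C) ⊓ M) := by
    intro M hM
    set X : Subgroup S := N ⊓ M with hXdef
    set Y : Subgroup S := C ⊓ M with hYdef
    set W : Subgroup ↥X := (N ⊓ A ⊓ M).subgroupOf X with hWdef
    -- δ maps A ⊓ M into X
    have hδX : ∀ a : S, a ∈ A ⊓ M → v⁻¹ * a⁻¹ * v * a ∈ X := by
      rintro a ⟨ha, haM⟩
      refine ⟨hgen a ha, ?_⟩
      have h5 : v⁻¹ * a⁻¹ * (v⁻¹)⁻¹ ∈ M := hM.conj_mem a⁻¹ (inv_mem haM) v⁻¹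
      rw [inv_inv] at h5
      exact mul_mem h5 haM
    haveI : Nonempty ↥(A ⊓ M) := ⟨1⟩
    set q : ↥(A ⊓ M) → ↥X ⧸ W :=
      fun a => QuotientGroup.mk ⟨v⁻¹ * (a : S)⁻¹ * v * (a : S), hδX a a.2⟩ with hqdef
    -- fibers of q are contained in cosets of Y
    have fib : ∀ a b : ↥(A ⊓ M), q a = q b → (b : S) * (a : S)⁻¹ ∈ Y := by
      intro a b hab
      rw [hqdef] at hab
      rw [QuotientGroup.eq, hWdef, Subgroup.mem_subgroupOf] at hab
      have hab' : (v⁻¹ * (a : S)⁻¹ * v * (a : S))⁻¹ * (v⁻¹ * (b : S)⁻¹ * v * (b : S))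
          ∈ N ⊓ A ⊓ M := hab
      set d : S := (b : S) * (a : S)⁻¹ with hddef
      have hdA : d ∈ A := mul_mem b.2.1 (inv_mem a.2.1)
      have hdM : d ∈ M := mul_mem b.2.2 (inv_mem a.2.2)
      have hid : (v⁻¹ * (a : S)⁻¹ * v * (a : S))⁻¹ * (v⁻¹ * (b : S)⁻¹ * v * (b : S))
          = (a : S)⁻¹ * (v⁻¹ * d⁻¹ * v * d) * (a : S) := by
        rw [hddef]; group
      rw [hid] at hab'
      have hδdA : v⁻¹ * d⁻¹ * v * d ∈ A := by
        have h6 : (a : S) * ((a : S)⁻¹ * (v⁻¹ * d⁻¹ * v * d) * (a : S)) * (a : S)⁻¹ ∈ A :=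
          mul_mem (mul_mem a.2.1 hab'.1.2) (inv_mem a.2.1)
        have h7 : (a : S) * ((a : S)⁻¹ * (v⁻¹ * d⁻¹ * v * d) * (a : S)) * (a : S)⁻¹
            = v⁻¹ * d⁻¹ * v * d := by group
        rwa [h7] at h6
      exact ⟨⟨hdA, star d hdA hδdA⟩, hdM⟩
    -- first injection
    set J : ↥(A ⊓ M) → (↥X ⧸ W) × ↥Y :=
      fun a => (q a, ⟨(a : S) * ((Function.invFun q (q a) : ↥(A ⊓ M)) : S)⁻¹,
        fib _ _ (Function.invFun_eq ⟨a, rfl⟩)⟩) with hJdef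
    have hJinj : Function.Injective J := by
      intro a b hab
      rw [hJdef, Prod.mk.injEq] at hab
      obtain ⟨h1, h2⟩ := hab
      rw [Subtype.mk.injEq, h1] at h2
      have : (a : S) = (b : S) := mul_right_cancel h2
      exact Subtype.ext this
    -- second injection
    have hXle : X ≤ (N ⊔ C) ⊓ M := inf_le_inf_right M le_sup_left
    have hYle : Y ≤ (N ⊔ C) ⊓ M := inf_le_inf_right M le_sup_right
    set K : (↥X ⧸ W) × ↥Y → ↥((N ⊔ C) ⊓ M) :=
      fun z => ⟨((z.1.out : ↥X) : S) * (z.2 : S),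
        mul_mem (hXle (z.1.out : ↥X).2) (hYle z.2.2)⟩ with hKdef
    have hKinj : Function.Injective K := by
      rintro ⟨c1, y1⟩ ⟨c2, y2⟩ h
      rw [hKdef, Subtype.mk.injEq] at h
      have hz : ((c2.out : ↥X) : S)⁻¹ * ((c1.out : ↥X) : S) = (y2 : S) * (y1 : S)⁻¹ := by
        calc ((c2.out : ↥X) : S)⁻¹ * ((c1.out : ↥X) : S)
            = ((c2.out : ↥X) : S)⁻¹ * (((c1.out : ↥X) : S) * (y1 : S)) * (y1 : S)⁻¹ := by
              group
          _ = ((c2.out : ↥X) : S)⁻¹ * (((c2.out : ↥X) : S) * (y2 : S)) * (y1 : S)⁻¹ := by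
              rw [h]
          _ = (y2 : S) * (y1 : S)⁻¹ := by group
      have hzX : ((c2.out : ↥X) : S)⁻¹ * ((c1.out : ↥X) : S) ∈ X :=
        mul_mem (inv_mem (c2.out : ↥X).2) (c1.out : ↥X).2
      have hzNAM : ((c2.out : ↥X) : S)⁻¹ * ((c1.out : ↥X) : S) ∈ N ⊓ A ⊓ M := by
        have hy1A : (y1 : S) ∈ A := (Subgroup.mem_inf.mp (Subgroup.mem_inf.mp y1.2).1).1
        have hy2A : (y2 : S) ∈ A := (Subgroup.mem_inf.mp (Subgroup.mem_inf.mp y2.2).1).1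
        obtain ⟨hzN, hzM⟩ := Subgroup.mem_inf.mp hzX
        refine Subgroup.mem_inf.mpr ⟨Subgroup.mem_inf.mpr ⟨hzN, ?_⟩, hzM⟩
        rw [hz]
        exact mul_mem hy2A (inv_mem hy1A)
      have hW : (c2.out : ↥X)⁻¹ * (c1.out : ↥X) ∈ W := by
        have h8 : (((c2.out : ↥X)⁻¹ * (c1.out : ↥X) : ↥X) : S) ∈ N ⊓ A ⊓ M := hzNAM
        exact h8
      have hc : c1 = c2 := by
        have h9 := QuotientGroup.eq.mpr hW
        rw [QuotientGroup.out_eq', QuotientGroup.out_eq'] at h9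
        exact h9.symm
      subst hc
      have hy : (y1 : S) = (y2 : S) := mul_left_cancel h
      exact Prod.ext rfl (Subtype.ext hy)
    exact Nat.card_le_card_of_injective (K ∘ J) (hKinj.comp hJinj)
  -- assemble
  refine ⟨?_, ?_, ?_⟩
  · -- A* is commutative
    rw [hrep]
    apply Subgroup.le_centralizer_iff_isMulCommutative.mp
    have hCcomm : IsMulCommutative C :=
      ⟨⟨fun x y => Subtype.ext (Subgroup.mul_comm_of_mem_isMulCommutative (H := A) x.2.1 y.2.1)⟩⟩
    apply sup_le
    · rw [Subgroup.le_centralizer_iff]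
      apply sup_le hNle inf_le_right
    · rw [Subgroup.le_centralizer_iff]
      apply sup_le
      · intro n hn
        rw [Subgroup.mem_centralizer_iff]
        intro c hc
        exact (Subgroup.mem_centralizer_iff.mp (hc.2) n hn).symm
      · exact Subgroup.le_centralizer_iff_isMulCommutative.mpr hCcomm
  · intro M hM
    rw [hrep]
    exact main M hM
  · have h := main ⊤ inferInstance
    rw [hrep]
    simpa using h
end

section
/- Let S be a finite p-group and A an abelian subgroup of S. Let v ∈ S be an element for which N = [v, A] is abelian, and set A* = N·C_A(N). If 1 = Z_0 ≤ Z_1 ≤ ⋯ ≤ Z_n = S is a central series of S such that |A ∩ Z_i| = |A* ∩ Z_i| for all i = 1, …, n, then A* = A. -/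
open scoped commutatorElement

theorem replacement_lemma_b
    (p : ℕ) [Fact p.Prime]
    (S : Type) [Group S] [Finite S] (hS : IsPGroup p S)
    (A : Subgroup S) (hA : IsMulCommutative A) (v : S)
    -- `N = [v, A]` is abelian
    (hN : ∀ x ∈ commSubgroup v A, ∀ y ∈ commSubgroup v A, x * y = y * x)
    -- a central series `1 = Z 0 ≤ Z 1 ≤ ⋯ ≤ Z n = S` of `S`
    (n : ℕ) (Z : ℕ → Subgroup S)
    (hZ0 : Z 0 = ⊥) (hZn : Z n = ⊤)
    (hZmono : ∀ i, Z i ≤ Z (i + 1))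
    (hZcentral : ∀ i, ⁅Z (i + 1), (⊤ : Subgroup S)⁆ ≤ Z i)
    -- `|A ∩ Z_i| = |A* ∩ Z_i|` for all `i = 1, …, n`
    (hcard : ∀ i, 1 ≤ i → i ≤ n →
      Nat.card ↥(A ⊓ Z i) = Nat.card ↥(replacementSubgroup v A ⊓ Z i)) :
    replacementSubgroup v A = A := by
  haveI := hA
  -- `N ≤ C(N)` since `N` is abelian
  have hNC : commSubgroup v A ≤ Subgroup.centralizer ((commSubgroup v A : Subgroup S) : Set S) := by
    intro x hx
    rw [Subgroup.mem_centralizer_iff]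
    intro g hg
    exact hN g hg x hx
  have hNA : commSubgroup v A ≤ replacementSubgroup v A := le_sup_left
  -- generators of `N`
  have hgen : ∀ b, b ∈ A → v⁻¹ * b⁻¹ * v * b ∈ commSubgroup v A := by
    intro b hb
    exact Subgroup.subset_closure ⟨b, hb, rfl⟩
  -- main induction
  have key : ∀ i, i ≤ n →
      (A ⊓ Z i ≤ Subgroup.centralizer ((commSubgroup v A : Subgroup S) : Set S) ∧
        A ⊓ Z i = replacementSubgroup v A ⊓ Z i) := by
    intro i
    induction i with
    | zero =>
      intro _
      rw [hZ0]
      constructor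
      · rw [inf_bot_eq]; exact bot_le
      · rw [inf_bot_eq, inf_bot_eq]
    | succ i ih =>
      intro hin
      obtain ⟨ihC, ihEq⟩ := ih (le_trans (Nat.le_succ i) hin)
      -- first part : `A ⊓ Z (i+1)` centralizes `N`
      have hC' : A ⊓ Z (i + 1) ≤
          Subgroup.centralizer ((commSubgroup v A : Subgroup S) : Set S) := by
        intro a ha
        rw [Subgroup.mem_inf] at ha
        obtain ⟨haA, haZ⟩ := ha
        -- `m = [v, a⁻¹] = v⁻¹av a⁻¹` lies in `N ∩ Z i ≤ A* ∩ Z i = A ∩ Z i ≤ A`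
        have hmN : v⁻¹ * a * v * a⁻¹ ∈ commSubgroup v A := by
          have := hgen a⁻¹ (A.inv_mem haA)
          rwa [inv_inv] at this
        have hmZ : v⁻¹ * a * v * a⁻¹ ∈ Z i := by
          have h1 : ⁅a, v⁻¹⁆ ∈ ⁅Z (i + 1), (⊤ : Subgroup S)⁆ :=
            Subgroup.commutator_mem_commutator haZ (Subgroup.mem_top v⁻¹)
          have h2 : ⁅v⁻¹, a⁆ ∈ ⁅Z (i + 1), (⊤ : Subgroup S)⁆ := by
            have := (⁅Z (i + 1), (⊤ : Subgroup S)⁆).inv_mem h1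
            rwa [commutatorElement_inv] at this
          have h3 : v⁻¹ * a * v * a⁻¹ = ⁅v⁻¹, a⁆ := by group
          rw [h3]
          exact hZcentral i h2
        have hmA : v⁻¹ * a * v * a⁻¹ ∈ A := by
          have hm : v⁻¹ * a * v * a⁻¹ ∈ replacementSubgroup v A ⊓ Z i :=
            Subgroup.mem_inf.mpr ⟨hNA hmN, hmZ⟩
          rw [← ihEq, Subgroup.mem_inf] at hm
          exact hm.1
        -- `c = v⁻¹ a v` commutes with every generator of `N`
        have hcgen : ∀ b, b ∈ A →
            (v⁻¹ * a * v) * (v⁻¹ * b⁻¹ * v * b) = (v⁻¹ * b⁻¹ * v * b) * (v⁻¹ * a * v) := by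
          intro b hb
          have h1 : (v⁻¹ * a * v * a⁻¹) * b = b * (v⁻¹ * a * v * a⁻¹) :=
            Subgroup.mul_comm_of_mem_isMulCommutative A hmA hb
          have h2 : a * b = b * a := Subgroup.mul_comm_of_mem_isMulCommutative A haA hb
          have h2' : a * b⁻¹ = b⁻¹ * a := Commute.inv_right h2
          have hcb : (v⁻¹ * a * v) * b = b * (v⁻¹ * a * v) := by
            have h : (v⁻¹ * a * v * a⁻¹ * a) * b = b * (v⁻¹ * a * v * a⁻¹ * a) :=
              Commute.mul_left h1 h2
            have e : v⁻¹ * a * v * a⁻¹ * a = v⁻¹ * a * v := by group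
            rwa [e] at h
          have hcx : (v⁻¹ * a * v) * (v⁻¹ * b⁻¹ * v) = (v⁻¹ * b⁻¹ * v) * (v⁻¹ * a * v) := by
            calc (v⁻¹ * a * v) * (v⁻¹ * b⁻¹ * v) = v⁻¹ * (a * b⁻¹) * v := by group
              _ = v⁻¹ * (b⁻¹ * a) * v := by rw [h2']
              _ = (v⁻¹ * b⁻¹ * v) * (v⁻¹ * a * v) := by group
          exact Commute.mul_right hcx hcb
        -- hence `c ∈ C(N)`
        have hcC : v⁻¹ * a * v ∈
            Subgroup.centralizer ((commSubgroup v A : Subgroup S) : Set S) := by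
          have hle : commSubgroup v A ≤ Subgroup.centralizer {v⁻¹ * a * v} := by
            rw [commSubgroup, Subgroup.closure_le]
            rintro x ⟨b, hb, rfl⟩
            rw [SetLike.mem_coe, Subgroup.mem_centralizer_iff]
            intro h hh
            rw [Set.mem_singleton_iff] at hh
            subst hh
            exact hcgen b hb
          rw [Subgroup.mem_centralizer_iff]
          intro g hg
          have := hle hg
          rw [Subgroup.mem_centralizer_iff] at this
          exact (this _ (Set.mem_singleton _)).symm
        -- `a = c * [v, a] ∈ C(N)`
        have ha' : (v⁻¹ * a * v) * (v⁻¹ * a⁻¹ * v * a) = a := by group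
        have : (v⁻¹ * a * v) * (v⁻¹ * a⁻¹ * v * a) ∈
            Subgroup.centralizer ((commSubgroup v A : Subgroup S) : Set S) :=
          Subgroup.mul_mem _ hcC (hNC (hgen a haA))
        rwa [ha'] at this
      refine ⟨hC', ?_⟩
      -- second part: `A ⊓ Z (i+1) ≤ A* ⊓ Z (i+1)`, and their cards agree
      have hle : A ⊓ Z (i + 1) ≤ replacementSubgroup v A ⊓ Z (i + 1) := by
        refine le_inf ?_ inf_le_right
        refine le_trans (le_inf inf_le_left hC') ?_
        exact le_sup_right
      have hcard' := hcard (i + 1) (Nat.succ_le_succ (Nat.zero_le i)) hin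
      exact Subgroup.eq_of_le_of_card_ge hle (le_of_eq hcard'.symm)
  have := (key n le_rfl).2
  rw [hZn, inf_top_eq, inf_top_eq] at this
  exact this.symm
end
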